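/- (Regret of Sleeping CB with the Krichevsky–Trofimov potential) In the Sleeping CB setup, define the betting amounts recursively by w_{t,i} = β_{t,i} · (1 + ∑_{s=1}^{t−1} z_{s,i} w_{s,i}) with betting fractions β_{t,i} = (∑_{s=1}^{t−1} z_{s,i}) / S_{t,i} whenever S_{t,i} ≥ 1 (and β_{t,i} = 0 otherwise), where S_{t,i} = ∑_{s=1}^{t} I_{s,i}. Then for every u ∈ Δ^N with π_i > 0 whenever u_i > 0, Regret_T(u) ≤ sqrt( 2 · (∑_{i=1}^N u_i S_{T,i}) · ( KL(u‖π) + (1/2)·ln T + 2 ) ). -/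

import Mathlib

set_option maxHeartbeats 800000
namespace SleepingKT
open Finset Filter Real Topology

/-- log-convexity of Gamma, exponentiated, two-point version. -/
lemma Gamma_interp {x y w1 w2 : ℝ} (hx : 0 < x) (hy : 0 < y) (h1 : 0 ≤ w1) (h2 : 0 ≤ w2)
    (hw : w1 + w2 = 1) :
    Real.Gamma (w1 * x + w2 * y) ≤ Real.Gamma x ^ w1 * Real.Gamma y ^ w2 := by
  have hmem : w1 * x + w2 * y ∈ Set.Ioi (0:ℝ) := by
    rcases eq_or_lt_of_le h1 with h | h
    · have : w2 = 1 := by linarith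
      simpa [← h, this] using hy
    · have : 0 < w1 * x := mul_pos h hx
      have : 0 ≤ w2 * y := mul_nonneg h2 hy.le
      simp only [Set.mem_Ioi]; linarith
  have hc := Real.convexOn_log_Gamma.2 (Set.mem_Ioi.2 hx) (Set.mem_Ioi.2 hy) h1 h2 hw
  simp only [smul_eq_mul, Function.comp_apply] at hc
  have hpos : 0 < Real.Gamma (w1 * x + w2 * y) := Real.Gamma_pos_of_pos hmem
  have hgx : 0 < Real.Gamma x := Real.Gamma_pos_of_pos hx
  have hgy : 0 < Real.Gamma y := Real.Gamma_pos_of_pos hy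
  calc Real.Gamma (w1 * x + w2 * y) = Real.exp (Real.log (Real.Gamma (w1 * x + w2 * y))) := by
        rw [Real.exp_log hpos]
    _ ≤ Real.exp (w1 * Real.log (Real.Gamma x) + w2 * Real.log (Real.Gamma y)) :=
        Real.exp_le_exp.2 hc
    _ = Real.Gamma x ^ w1 * Real.Gamma y ^ w2 := by
        rw [Real.exp_add, Real.rpow_def_of_pos hgx, Real.rpow_def_of_pos hgy,
          mul_comm w1, mul_comm w2]

/-- `Γ(a+1/2) ≤ Γ(a) * √a`. -/
lemma Gamma_add_half_le {a : ℝ} (ha : 0 < a) :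
    Real.Gamma (a + 1/2) ≤ Real.Gamma a * Real.sqrt a := by
  have h := Gamma_interp ha (by linarith : (0:ℝ) < a + 1) (by norm_num : (0:ℝ) ≤ 1/2)
    (by norm_num : (0:ℝ) ≤ 1/2) (by norm_num)
  have harg : (1/2 : ℝ) * a + 1/2 * (a+1) = a + 1/2 := by ring
  rw [harg] at h
  have hGa : 0 < Real.Gamma a := Real.Gamma_pos_of_pos ha
  have h2 : Real.Gamma (a+1) = a * Real.Gamma a := Real.Gamma_add_one (ne_of_gt ha)
  calc Real.Gamma (a + 1/2) ≤ Real.Gamma a ^ (1/2:ℝ) * Real.Gamma (a+1) ^ (1/2:ℝ) := h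
    _ = (Real.Gamma a ^ (1/2:ℝ) * Real.Gamma a ^ (1/2:ℝ)) * a ^ (1/2:ℝ) := by
        rw [h2, Real.mul_rpow ha.le hGa.le]; ring
    _ = Real.Gamma a * Real.sqrt a := by
        rw [← Real.rpow_add hGa, Real.sqrt_eq_rpow]; norm_num



lemma factor_lb {a u : ℝ} (ha : 0 < a) (hu : 0 ≤ u) (hua : u < a) (j : ℕ) :
    Real.exp (u^2 * (1/(a+j) - 1/(a+j+1))) ≤ (a+j)^2 / ((a+u+j)*(a-u+j)) := by
  set b : ℝ := a + j with hb
  have hbpos : 0 < b := by positivity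
  have hub : u < b := by simp only [hb]; have : (0:ℝ) ≤ j := Nat.cast_nonneg j; linarith
  have hden : 0 < b^2 - u^2 := by nlinarith
  have hden' : (a+u+j)*(a-u+j) = b^2 - u^2 := by simp only [hb]; ring
  have hv : u^2 * (1/b - 1/(b+1)) = u^2/(b*(b+1)) := by
    field_simp
    ring
  rw [hden', hv]
  -- exp(-v) ≥ 1 - u^2/b^2  where v = u^2/(b(b+1))
  have h1 : 1 - u^2/b^2 ≤ Real.exp (-(u^2/(b*(b+1)))) := by
    have h2 : -(u^2/(b*(b+1))) + 1 ≤ Real.exp (-(u^2/(b*(b+1)))) := Real.add_one_le_exp _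
    have h3 : u^2/(b*(b+1)) ≤ u^2/b^2 := by
      apply div_le_div_of_nonneg_left (by positivity) (by positivity)
      nlinarith
    linarith
  have hb2 : (0:ℝ) < b^2 := by positivity
  have h4 : b^2 - u^2 ≤ b^2 * Real.exp (-(u^2/(b*(b+1)))) := by
    have := mul_le_mul_of_nonneg_left h1 hb2.le
    calc b^2 - u^2 = b^2 * (1 - u^2/b^2) := by field_simp
      _ ≤ _ := this
  rw [le_div_iff₀ hden]
  calc Real.exp (u^2/(b*(b+1))) * (b^2 - u^2)
      ≤ Real.exp (u^2/(b*(b+1))) * (b^2 * Real.exp (-(u^2/(b*(b+1))))) :=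
        mul_le_mul_of_nonneg_left h4 (Real.exp_nonneg _)
    _ = b^2 := by rw [← mul_assoc, mul_comm (Real.exp _) (b^2), mul_assoc, ← Real.exp_add]
                  simp

/-- key lower bound: `Γ(a+u)Γ(a-u) ≥ Γ(a)^2 exp(u²/a)` for `0 ≤ u < a`. -/
lemma Gamma_mul_Gamma_lb {a u : ℝ} (ha : 0 < a) (hu : 0 ≤ u) (hua : u < a) :
    Real.Gamma a ^ 2 * Real.exp (u^2 / a) ≤ Real.Gamma (a + u) * Real.Gamma (a - u) := by
  have hGa : 0 < Real.Gamma a := Real.Gamma_pos_of_pos ha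
  set P : ℕ → ℝ := fun n => ∏ j ∈ Finset.range (n+1), ((a+j)^2 / ((a+u+j)*(a-u+j))) with hP
  set L : ℝ := Real.Gamma (a+u) * Real.Gamma (a-u) / Real.Gamma a ^ 2 with hL
  -- positivity of linear factors
  have hfac : ∀ j : ℕ, 0 < (a+u+j) ∧ 0 < (a-u+j) ∧ 0 < (a+(j:ℝ)) := by
    intro j
    have : (0:ℝ) ≤ j := Nat.cast_nonneg j
    refine ⟨by linarith, by linarith, by linarith⟩
  -- identity with GammaSeq
  have hident : ∀ n : ℕ, 1 ≤ n →
      Real.GammaSeq (a+u) n * Real.GammaSeq (a-u) n / (Real.GammaSeq a n)^2 = P n := by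
    intro n hn
    have hnpos : (0:ℝ) < n := by exact_mod_cast hn
    simp only [Real.GammaSeq, hP]
    rw [Finset.prod_div_distrib]
    have e1 : ∏ j ∈ Finset.range (n+1), ((a+(j:ℝ))^2) = (∏ j ∈ Finset.range (n+1), (a+(j:ℝ)))^2 := by
      rw [← Finset.prod_pow]
    have e2 : ∏ j ∈ Finset.range (n+1), ((a+u+(j:ℝ))*(a-u+(j:ℝ)))
        = (∏ j ∈ Finset.range (n+1), (a+u+(j:ℝ))) * (∏ j ∈ Finset.range (n+1), (a-u+(j:ℝ))) := by
      rw [← Finset.prod_mul_distrib]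
    rw [e1, e2]
    have q3 : (0:ℝ) < ∏ j ∈ Finset.range (n+1), (a+(j:ℝ)) :=
      Finset.prod_pos fun j _ => (hfac j).2.2
    have q1 : (0:ℝ) < ∏ j ∈ Finset.range (n+1), (a+u+(j:ℝ)) :=
      Finset.prod_pos fun j _ => (hfac j).1
    have q2 : (0:ℝ) < ∏ j ∈ Finset.range (n+1), (a-u+(j:ℝ)) :=
      Finset.prod_pos fun j _ => (hfac j).2.1
    have hfact : (0:ℝ) < (n.factorial : ℝ) := by exact_mod_cast Nat.factorial_pos n
    have hr1 : (n:ℝ) ^ (a+u) = (n:ℝ)^a * (n:ℝ)^u := Real.rpow_add hnpos _ _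
    have hr2 : (n:ℝ) ^ (a-u) = (n:ℝ)^a / (n:ℝ)^u := Real.rpow_sub hnpos _ _
    have hra : (0:ℝ) < (n:ℝ)^a := Real.rpow_pos_of_pos hnpos _
    have hru : (0:ℝ) < (n:ℝ)^u := Real.rpow_pos_of_pos hnpos _
    rw [hr1, hr2]
    field_simp
  have htend0 : Tendsto (fun n => Real.GammaSeq (a+u) n * Real.GammaSeq (a-u) n
      / (Real.GammaSeq a n)^2) atTop (𝓝 L) := by
    apply Tendsto.div
      (((Real.GammaSeq_tendsto_Gamma (a+u)).mul (Real.GammaSeq_tendsto_Gamma (a-u))))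
      ((Real.GammaSeq_tendsto_Gamma a).pow 2)
    positivity
  have htendP : Tendsto P atTop (𝓝 L) := by
    apply htend0.congr'
    filter_upwards [eventually_ge_atTop 1] with n hn using hident n hn
  -- lower bound for P n
  have hPn : ∀ n : ℕ, Real.exp (u^2 * (1/a - 1/(a+n+1))) ≤ P n := by
    intro n
    have step : ∀ j ∈ Finset.range (n+1),
        Real.exp (u^2 * (1/(a+(j:ℝ)) - 1/(a+(j:ℝ)+1))) ≤ (a+(j:ℝ))^2 / ((a+u+(j:ℝ))*(a-u+(j:ℝ))) :=
      fun j _ => factor_lb ha hu hua j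
    have := Finset.prod_le_prod (fun j _ => (Real.exp_nonneg _)) step
    rw [← Real.exp_sum] at this
    refine le_trans (le_of_eq ?_) this
    congr 1
    rw [← Finset.mul_sum]
    congr 1
    have tele : ∑ j ∈ Finset.range (n+1), (1/(a+(j:ℝ)) - 1/(a+(j:ℝ)+1))
        = 1/(a+(0:ℕ)) - 1/(a+((n+1:ℕ):ℝ)) := by
      have := Finset.sum_range_sub' (f := fun j : ℕ => 1/(a+(j:ℝ))) (n := n+1)
      simp only [Nat.cast_add, Nat.cast_one] at this ⊢
      rw [← this]
      apply Finset.sum_congr rfl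
      intro j _
      push_cast
      ring_nf
    rw [tele]
    push_cast
    ring
  -- L ≥ each lower bound
  have hLge : ∀ n : ℕ, Real.exp (u^2 * (1/a - 1/(a+n+1))) ≤ L := by
    intro n
    apply ge_of_tendsto htendP
    filter_upwards [eventually_ge_atTop n] with m hm
    refine le_trans ?_ (hPn m)
    apply Real.exp_le_exp.2
    apply mul_le_mul_of_nonneg_left _ (by positivity)
    have h1 : (0:ℝ) < a + n + 1 := by have : (0:ℝ) ≤ (n:ℝ) := Nat.cast_nonneg n; linarith
    have h2 : a + (n:ℝ) + 1 ≤ a + (m:ℝ) + 1 := by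
      have : (n:ℝ) ≤ m := by exact_mod_cast hm
      linarith
    have := one_div_le_one_div_of_le h1 h2
    linarith
  have hclim : Tendsto (fun n : ℕ => Real.exp (u^2 * (1/a - 1/(a+n+1)))) atTop
      (𝓝 (Real.exp (u^2 * (1/a - 0)))) := by
    apply (Real.continuous_exp.tendsto _).comp
    apply Tendsto.const_mul
    apply Tendsto.const_sub
    simp only [one_div]
    apply Tendsto.comp tendsto_inv_atTop_zero
    apply tendsto_atTop_add_const_right
    apply tendsto_atTop_add_const_left
    exact tendsto_natCast_atTop_atTop
  have hexpL : Real.exp (u^2 / a) ≤ L := by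
    have := le_of_tendsto hclim (Eventually.of_forall hLge)
    calc Real.exp (u^2/a) = Real.exp (u^2 * (1/a - 0)) := by ring_nf
      _ ≤ L := this
  have : Real.Gamma (a+u) * Real.Gamma (a-u) = L * Real.Gamma a ^ 2 := by
    rw [hL]; field_simp
  rw [this]
  calc Real.Gamma a ^2 * Real.exp (u^2/a) ≤ Real.Gamma a^2 * L := by
        apply mul_le_mul_of_nonneg_left hexpL (by positivity)
    _ = L * Real.Gamma a ^2 := by ring
  


noncomputable def ktF (m x : ℝ) : ℝ :=
  (2:ℝ) ^ m * Real.Gamma ((m + 1 + x) / 2) * Real.Gamma ((m + 1 - x) / 2) /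
    (Real.pi * Real.Gamma (m + 1))

lemma ktF_zero : ktF 0 0 = 1 := by
  have h : ((0:ℝ) + 1 + 0) / 2 = 1/2 := by norm_num
  have h' : ((0:ℝ) + 1 - 0) / 2 = 1/2 := by norm_num
  rw [ktF, h, h', Real.Gamma_one_half_eq]
  rw [show ((0:ℝ)+1) = 1 by norm_num, Real.Gamma_one, Real.rpow_zero, one_mul, mul_one,
    Real.mul_self_sqrt Real.pi_pos.le]
  field_simp

lemma ktF_pos {m x : ℝ} (hm : 0 ≤ m) (h1 : -(m+1) < x) (h2 : x < m+1) : 0 < ktF m x := by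
  have g1 : 0 < (m + 1 + x)/2 := by linarith
  have g2 : 0 < (m + 1 - x)/2 := by linarith
  have g3 : 0 < m + 1 := by linarith
  have := Real.Gamma_pos_of_pos g1
  have := Real.Gamma_pos_of_pos g2
  have := Real.Gamma_pos_of_pos g3
  have := Real.pi_pos
  have : (0:ℝ) < (2:ℝ)^m := Real.rpow_pos_of_pos two_pos m
  rw [ktF]; positivity

lemma ktF_add_one {m x : ℝ} (hm : 1 ≤ m) (hx : -(m:ℝ) < x) :
    ktF m (x + 1) = ktF (m - 1) x * ((m + x) / m) := by
  have hmx : 0 < (m + x)/2 := by linarith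
  have hm0 : 0 < m := by linarith
  have e1 : (m + 1 + (x+1))/2 = (m + x)/2 + 1 := by ring
  have e2 : (m + 1 - (x+1))/2 = ((m-1) + 1 - x)/2 := by ring
  have e3 : ((m-1) + 1 + x)/2 = (m+x)/2 := by ring
  have h3 : Real.Gamma ((m+x)/2 + 1) = ((m+x)/2) * Real.Gamma ((m+x)/2) :=
    Real.Gamma_add_one (ne_of_gt hmx)
  have h4 : Real.Gamma (m + 1) = m * Real.Gamma m := Real.Gamma_add_one (ne_of_gt hm0)
  have h5 : (2:ℝ)^m = (2:ℝ)^(m-1) * 2 := by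
    rw [← Real.rpow_add_one (by norm_num : (2:ℝ) ≠ 0)]; ring_nf
  have hg : 0 < Real.Gamma m := Real.Gamma_pos_of_pos hm0
  have hpi := Real.pi_pos
  rw [ktF, ktF, e1, e2, e3, h3, h4, h5]
  rw [show m - 1 + 1 = m by ring]
  field_simp

lemma ktF_sub_one {m x : ℝ} (hm : 1 ≤ m) (hx : x < (m:ℝ)) :
    ktF m (x - 1) = ktF (m - 1) x * ((m - x) / m) := by
  have hmx : 0 < (m - x)/2 := by linarith
  have hm0 : 0 < m := by linarith
  have e1 : (m + 1 - (x-1))/2 = (m - x)/2 + 1 := by ring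
  have e2 : (m + 1 + (x-1))/2 = ((m-1) + 1 + x)/2 := by ring
  have e3 : ((m-1) + 1 - x)/2 = (m-x)/2 := by ring
  have h3 : Real.Gamma ((m-x)/2 + 1) = ((m-x)/2) * Real.Gamma ((m-x)/2) :=
    Real.Gamma_add_one (ne_of_gt hmx)
  have h4 : Real.Gamma (m + 1) = m * Real.Gamma m := Real.Gamma_add_one (ne_of_gt hm0)
  have h5 : (2:ℝ)^m = (2:ℝ)^(m-1) * 2 := by
    rw [← Real.rpow_add_one (by norm_num : (2:ℝ) ≠ 0)]; ring_nf
  have hg : 0 < Real.Gamma m := Real.Gamma_pos_of_pos hm0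
  have hpi := Real.pi_pos
  rw [ktF, ktF, e1, e2, e3, h3, h4, h5]
  rw [show m - 1 + 1 = m by ring]
  field_simp

/-- the chord/step inequality for the KT potential. -/
lemma ktF_step {m x t : ℝ} (hm : 1 ≤ m) (hx : |x| ≤ m - 1) (ht : |t| ≤ 1) :
    ktF m (x + t) ≤ ktF (m - 1) x * (1 + x * t / m) := by
  have hx1 : -(m-1) ≤ x := (abs_le.1 hx).1
  have hx2 : x ≤ m - 1 := (abs_le.1 hx).2
  have ht1 : -1 ≤ t := (abs_le.1 ht).1
  have ht2 : t ≤ 1 := (abs_le.1 ht).2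
  have hm0 : 0 < m := by linarith
  set w1 : ℝ := (1 - t)/2 with hw1
  set w2 : ℝ := (1 + t)/2 with hw2
  have hw1n : 0 ≤ w1 := by rw [hw1]; linarith
  have hw2n : 0 ≤ w2 := by rw [hw2]; linarith
  have hww : w1 + w2 = 1 := by rw [hw1, hw2]; ring
  -- positivity of the four Gamma arguments
  have hX1 : 0 < (m + x)/2 := by linarith
  have hX2 : 0 < (m + 2 + x)/2 := by linarith
  have hY1 : 0 < (m + 2 - x)/2 := by linarith
  have hY2 : 0 < (m - x)/2 := by linarith
  -- first interpolation
  have int1 : Real.Gamma ((m + 1 + (x+t))/2)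
      ≤ Real.Gamma ((m+x)/2) ^ w1 * Real.Gamma ((m+2+x)/2) ^ w2 := by
    have := Gamma_interp hX1 hX2 hw1n hw2n hww
    have e : w1 * ((m+x)/2) + w2 * ((m+2+x)/2) = (m + 1 + (x+t))/2 := by
      rw [hw1, hw2]; ring
    rwa [e] at this
  have int2 : Real.Gamma ((m + 1 - (x+t))/2)
      ≤ Real.Gamma ((m+2-x)/2) ^ w1 * Real.Gamma ((m-x)/2) ^ w2 := by
    have := Gamma_interp hY1 hY2 hw1n hw2n hww
    have e : w1 * ((m+2-x)/2) + w2 * ((m-x)/2) = (m + 1 - (x+t))/2 := by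
      rw [hw1, hw2]; ring
    rwa [e] at this
  set C : ℝ := (2:ℝ)^m / (Real.pi * Real.Gamma (m+1)) with hC
  have hCpos : 0 < C := by
    have := Real.Gamma_pos_of_pos (by linarith : (0:ℝ) < m + 1)
    have := Real.pi_pos
    have : (0:ℝ) < (2:ℝ)^m := Real.rpow_pos_of_pos two_pos m
    rw [hC]; positivity
  -- key: ktF m (x+t) ≤ (ktF m (x-1))^w1 * (ktF m (x+1))^w2
  have hA : ktF m (x - 1) = C * (Real.Gamma ((m+x)/2) * Real.Gamma ((m+2-x)/2)) := by
    rw [ktF, hC]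
    rw [show (m + 1 + (x-1))/2 = (m+x)/2 by ring, show (m + 1 - (x-1))/2 = (m+2-x)/2 by ring]
    ring
  have hB : ktF m (x + 1) = C * (Real.Gamma ((m+2+x)/2) * Real.Gamma ((m-x)/2)) := by
    rw [ktF, hC]
    rw [show (m + 1 + (x+1))/2 = (m+2+x)/2 by ring, show (m + 1 - (x+1))/2 = (m-x)/2 by ring]
    ring
  have hgm : ktF m (x + t) ≤ ktF m (x-1) ^ w1 * ktF m (x+1) ^ w2 := by
    have hkt : ktF m (x + t) = C * (Real.Gamma ((m + 1 + (x+t))/2) * Real.Gamma ((m + 1 - (x+t))/2)) := by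
      rw [ktF, hC]; ring
    rw [hkt, hA, hB]
    have g1 := Real.Gamma_pos_of_pos hX1
    have g2 := Real.Gamma_pos_of_pos hX2
    have g3 := Real.Gamma_pos_of_pos hY1
    have g4 := Real.Gamma_pos_of_pos hY2
    have step1 : Real.Gamma ((m + 1 + (x+t))/2) * Real.Gamma ((m + 1 - (x+t))/2)
        ≤ (Real.Gamma ((m+x)/2) ^ w1 * Real.Gamma ((m+2+x)/2) ^ w2)
          * (Real.Gamma ((m+2-x)/2) ^ w1 * Real.Gamma ((m-x)/2) ^ w2) := by
      apply mul_le_mul int1 int2 (Real.Gamma_pos_of_pos (by linarith : (0:ℝ) < (m+1-(x+t))/2)).le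
      positivity
    calc C * (Real.Gamma ((m + 1 + (x+t))/2) * Real.Gamma ((m + 1 - (x+t))/2))
        ≤ C * ((Real.Gamma ((m+x)/2) ^ w1 * Real.Gamma ((m+2+x)/2) ^ w2)
          * (Real.Gamma ((m+2-x)/2) ^ w1 * Real.Gamma ((m-x)/2) ^ w2)) :=
          mul_le_mul_of_nonneg_left step1 hCpos.le
      _ = (C * (Real.Gamma ((m+x)/2) * Real.Gamma ((m+2-x)/2))) ^ w1
          * (C * (Real.Gamma ((m+2+x)/2) * Real.Gamma ((m-x)/2))) ^ w2 := by
          rw [Real.mul_rpow hCpos.le (by positivity), Real.mul_rpow hCpos.le (by positivity),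
            Real.mul_rpow g1.le g3.le, Real.mul_rpow g2.le g4.le]
          have hCsplit : C = C ^ w1 * C ^ w2 := by
            rw [← Real.rpow_add hCpos, hww, Real.rpow_one]
          conv_lhs => rw [hCsplit]
          ring
  have hxm1 : ktF m (x-1) = ktF (m-1) x * ((m-x)/m) := ktF_sub_one hm (by linarith)
  have hxp1 : ktF m (x+1) = ktF (m-1) x * ((m+x)/m) := ktF_add_one hm (by linarith)
  have hApos : 0 < ktF m (x-1) := ktF_pos (by linarith) (by linarith) (by linarith)
  have hBpos : 0 < ktF m (x+1) := ktF_pos (by linarith) (by linarith) (by linarith)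
  calc ktF m (x+t) ≤ ktF m (x-1) ^ w1 * ktF m (x+1) ^ w2 := hgm
    _ ≤ w1 * ktF m (x-1) + w2 * ktF m (x+1) :=
        Real.geom_mean_le_arith_mean2_weighted hw1n hw2n hApos.le hBpos.le hww
    _ = ktF (m-1) x * (1 + x * t / m) := by
        rw [hxm1, hxp1, hw1, hw2]; field_simp; ring

/-- lower bound on the KT potential. -/
lemma ktF_lower {m x : ℝ} (hm : 1 ≤ m) (hx : |x| ≤ m) :
    Real.exp (x^2/(2*m) - (1/2)*Real.log m - 2) ≤ ktF m x := by
  have hm0 : 0 < m := by linarith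
  set a : ℝ := (m+1)/2 with hadef
  set u : ℝ := |x|/2 with hudef
  have ha : 0 < a := by rw [hadef]; linarith
  have hu : 0 ≤ u := by rw [hudef]; positivity
  have hua : u < a := by
    rw [hudef, hadef]
    have := abs_nonneg x
    linarith [hx]
  have hGa : 0 < Real.Gamma a := Real.Gamma_pos_of_pos ha
  have hGah : 0 < Real.Gamma (a + 1/2) := Real.Gamma_pos_of_pos (by linarith)
  have hpi := Real.pi_pos
  have hsqpi : 0 < Real.sqrt Real.pi := Real.sqrt_pos.2 hpi
  have h2m : (0:ℝ) < (2:ℝ)^m := Real.rpow_pos_of_pos two_pos m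
  have key := Gamma_mul_Gamma_lb ha hu hua
  have hsym : Real.Gamma ((m+1+x)/2) * Real.Gamma ((m+1-x)/2)
      = Real.Gamma (a+u) * Real.Gamma (a-u) := by
    rcases abs_cases x with ⟨h1, _⟩ | ⟨h1, _⟩
    · rw [show a+u = (m+1+x)/2 by rw [hadef, hudef, h1]; ring,
        show a-u = (m+1-x)/2 by rw [hadef, hudef, h1]; ring]
    · rw [show a+u = (m+1-x)/2 by rw [hadef, hudef, h1]; ring,
        show a-u = (m+1+x)/2 by rw [hadef, hudef, h1]; ring]
      ring
  -- duplication formula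
  have dup := Real.Gamma_mul_Gamma_add_half a
  rw [show 2*a = m+1 by rw [hadef]; ring] at dup
  rw [show (1 - (m+1) : ℝ) = -m by ring, Real.rpow_neg two_pos.le] at dup
  have key2 : Real.Gamma (m+1) * Real.sqrt Real.pi
      = Real.Gamma a * Real.Gamma (a+1/2) * (2:ℝ)^m := by
    rw [dup]
    have h9 : ((2:ℝ)^m)⁻¹ * (2:ℝ)^m = 1 := inv_mul_cancel₀ h2m.ne'
    calc Real.Gamma (m+1) * Real.sqrt Real.pi
        = Real.Gamma (m+1) * Real.sqrt Real.pi * (((2:ℝ)^m)⁻¹ * (2:ℝ)^m) := by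
          rw [h9, mul_one]
      _ = Real.Gamma (m+1) * ((2:ℝ)^m)⁻¹ * Real.sqrt Real.pi * (2:ℝ)^m := by ring
  have hktF : ktF m x = Real.Gamma (a+u) * Real.Gamma (a-u)
      / (Real.sqrt Real.pi * Real.Gamma a * Real.Gamma (a+1/2)) := by
    have hGm1 : 0 < Real.Gamma (m+1) := Real.Gamma_pos_of_pos (by linarith)
    rw [ktF, mul_assoc, hsym]
    rw [div_eq_div_iff (by positivity) (by positivity)]
    have hpi_eq : Real.pi = Real.sqrt Real.pi * Real.sqrt Real.pi :=
      (Real.mul_self_sqrt hpi.le).symm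
    have e4 : Real.pi * Real.Gamma (m+1)
        = Real.sqrt Real.pi * (Real.Gamma a * Real.Gamma (a+1/2) * (2:ℝ)^m) := by
      rw [← key2]; nth_rewrite 1 [hpi_eq]; ring
    rw [e4]; ring
  -- exponent comparison
  have hu2 : u^2/a = x^2/(2*(m+1)) := by
    rw [hudef, hadef, div_pow, sq_abs]
    rw [div_div_eq_mul_div, div_mul_eq_mul_div, div_div]
    norm_num
    ring_nf
    field_simp
    ring
  have hx2m : x^2 ≤ m^2 := by
    have h1 : x^2 = |x|^2 := (sq_abs x).symm
    nlinarith [abs_nonneg x]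
  have h12 : x^2/(2*m) ≤ u^2/a + 1/2 := by
    rw [hu2]
    have e5 : x^2/(2*m) - x^2/(2*(m+1)) = x^2/(2*m*(m+1)) := by
      field_simp; ring
    have h13 : x^2/(2*m*(m+1)) ≤ 1/2 := by
      rw [div_le_iff₀ (by positivity)]; nlinarith
    linarith
  have hloga : Real.log a ≤ Real.log m := by
    apply Real.log_le_log ha
    rw [hadef]; linarith
  have hlogpi : Real.log Real.pi ≤ 3 := by
    have h1 := Real.log_le_sub_one_of_pos hpi
    have h2 := Real.pi_le_four
    linarith
  have hlogm0 : 0 ≤ Real.log m := Real.log_nonneg hm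
  have hexp : x^2/(2*m) - (1/2)*Real.log m - 2
      ≤ u^2/a - ((1/2)*Real.log Real.pi + (1/2)*Real.log a) := by
    nlinarith [h12, hloga, hlogpi, hlogm0]
  have hsqa : 0 < Real.sqrt a := Real.sqrt_pos.2 ha
  have hrhs : Real.exp (u^2/a) / (Real.sqrt Real.pi * Real.sqrt a)
      = Real.exp (u^2/a - ((1/2)*Real.log Real.pi + (1/2)*Real.log a)) := by
    have e6 : Real.sqrt Real.pi * Real.sqrt a
        = Real.exp ((1/2)*Real.log Real.pi + (1/2)*Real.log a) := by
      rw [Real.sqrt_eq_rpow, Real.sqrt_eq_rpow, Real.rpow_def_of_pos hpi,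
        Real.rpow_def_of_pos ha, ← Real.exp_add]
      ring_nf
    rw [e6, ← Real.exp_sub]
  have step1 : Real.exp (x^2/(2*m) - (1/2)*Real.log m - 2)
      ≤ Real.exp (u^2/a) / (Real.sqrt Real.pi * Real.sqrt a) := by
    rw [hrhs]; exact Real.exp_le_exp.2 hexp
  have hGah_le : Real.Gamma (a+1/2) ≤ Real.Gamma a * Real.sqrt a := Gamma_add_half_le ha
  have hGau : 0 < Real.Gamma (a+u) := Real.Gamma_pos_of_pos (by linarith)
  have hGau' : 0 < Real.Gamma (a-u) := Real.Gamma_pos_of_pos (by linarith)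
  have step2 : Real.exp (u^2/a) / (Real.sqrt Real.pi * Real.sqrt a)
      = (Real.Gamma a^2 * Real.exp (u^2/a))
        / (Real.sqrt Real.pi * Real.Gamma a * (Real.Gamma a * Real.sqrt a)) := by
    field_simp
  have step3 : (Real.Gamma a^2 * Real.exp (u^2/a))
        / (Real.sqrt Real.pi * Real.Gamma a * (Real.Gamma a * Real.sqrt a))
      ≤ (Real.Gamma (a+u) * Real.Gamma (a-u))
        / (Real.sqrt Real.pi * Real.Gamma a * Real.Gamma (a+1/2)) := by
    apply div_le_div₀ (by positivity) key (by positivity)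
    exact mul_le_mul_of_nonneg_left hGah_le (by positivity)
  rw [hktF]
  exact le_trans step1 (le_trans (le_of_eq step2) step3)

end SleepingKT

open Finset

/-- Corollary 1 (Regret of Sleeping CB with the Krichevsky–Trofimov potential, δ = 0):
with betting fractions `β_{t,i} = (∑_{s<t} z_{s,i}) / S_{t,i}` (and `0` when `S_{t,i} < 1`)
and betting amounts `w_{t,i} = β_{t,i} (1 + ∑_{s<t} z_{s,i} w_{s,i})`, the sleeping-experts
regret is bounded by `sqrt(2 (∑_i u_i S_{T,i}) (KL(u‖π) + (1/2) ln T + 2))`. -/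
theorem sleeping_cb_kt_regret
    (N T : ℕ) (hT : 1 ≤ T)
    (π u : Fin N → ℝ)
    (hπ0 : ∀ i, 0 ≤ π i) (hπ1 : ∑ i, π i = 1)
    (hu0 : ∀ i, 0 ≤ u i) (hu1 : ∑ i, u i = 1)
    (hsupp : ∀ i, 0 < u i → 0 < π i)
    (ℓ Ind w p g z S : ℕ → Fin N → ℝ) (h : ℕ → ℝ)
    (hℓ : ∀ t i, ℓ t i ∈ Set.Icc (0:ℝ) 1)
    (hInd : ∀ t i, Ind t i = 0 ∨ Ind t i = 1)
    (hawake : ∀ t, 1 ≤ t → t ≤ T → ∃ i, Ind t i = 1 ∧ 0 < π i)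
    (hS : ∀ t i, S t i = ∑ s ∈ Finset.Icc 1 t, Ind s i)
    (hw : ∀ t i, w t i =
      (if 1 ≤ S t i then (∑ s ∈ Finset.Icc 1 (t - 1), z s i) / S t i else 0) *
        (1 + ∑ s ∈ Finset.Icc 1 (t - 1), z s i * w s i))
    (hp : ∀ t i, p t i =
      if 0 < ∑ j, π j * Ind t j * max (w t j) 0
      then (π i * Ind t i * max (w t i) 0) / ∑ j, π j * Ind t j * max (w t j) 0
      else (π i * Ind t i) / ∑ j, π j * Ind t j)
    (hh : ∀ t, h t = ∑ i, Ind t i * p t i * ℓ t i)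
    (hg : ∀ t i, g t i = if 0 < w t i then h t - ℓ t i else max (h t - ℓ t i) 0)
    (hz : ∀ t i, z t i = Ind t i * g t i) :
    ∑ t ∈ Finset.Icc 1 T, ∑ i, Ind t i * u i * (h t - ℓ t i)
      ≤ Real.sqrt (2 * (∑ i, u i * S T i) *
          ((∑ i, u i * Real.log (u i / π i)) + (1 / 2) * Real.log T + 2)) := by
  -- basic facts about the indicators
  have hI0 : ∀ t i, 0 ≤ Ind t i := by
    intro t i; rcases hInd t i with h' | h' <;> rw [h'] <;> norm_num
  have hI1 : ∀ t i, Ind t i ≤ 1 := by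
    intro t i; rcases hInd t i with h' | h' <;> rw [h'] <;> norm_num
  -- basic facts about S
  have hS0 : ∀ i, S 0 i = 0 := by intro i; rw [hS]; simp
  have hSnonneg : ∀ t i, 0 ≤ S t i := by
    intro t i; rw [hS]; exact Finset.sum_nonneg fun s _ => hI0 s i
  have hSsucc : ∀ t i, S (t+1) i = S t i + Ind (t+1) i := by
    intro t i; rw [hS, hS, Finset.sum_Icc_succ_top (Nat.le_add_left 1 t)]
  have hSle : ∀ t i, S t i ≤ (t:ℝ) := by
    intro t i
    rw [hS]
    calc ∑ s ∈ Finset.Icc 1 t, Ind s i ≤ ∑ s ∈ Finset.Icc 1 t, (1:ℝ) :=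
          Finset.sum_le_sum fun s _ => hI1 s i
      _ = (t:ℝ) := by rw [Finset.sum_const, Nat.card_Icc]; simp
  -- facts at awake rounds
  have hround : ∀ t, 1 ≤ t → t ≤ T →
      (0 ≤ h t ∧ h t ≤ 1) ∧ (∀ i, |z t i| ≤ Ind t i) ∧
      (∀ i, Ind t i * (h t - ℓ t i) ≤ z t i) ∧
      (∑ i, π i * (z t i * w t i) ≤ 0) := by
    intro t ht1 ht2
    have hDnonneg : (0:ℝ) ≤ ∑ j, π j * Ind t j * max (w t j) 0 :=
      Finset.sum_nonneg fun j _ => mul_nonneg (mul_nonneg (hπ0 j) (hI0 t j)) (le_max_right _ _)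
    have hEpos : (0:ℝ) < ∑ j, π j * Ind t j := by
      obtain ⟨i0, hi0, hπi0⟩ := hawake t ht1 ht2
      have e0 : π i0 * Ind t i0 = π i0 := by rw [hi0, mul_one]
      calc (0:ℝ) < π i0 := hπi0
        _ = π i0 * Ind t i0 := e0.symm
        _ ≤ ∑ j, π j * Ind t j := Finset.single_le_sum (f := fun j => π j * Ind t j)
            (fun j _ => mul_nonneg (hπ0 j) (hI0 t j)) (Finset.mem_univ i0)
    have hpnn : ∀ i, 0 ≤ p t i := by
      intro i; rw [hp]
      split_ifs with hd
      · exact div_nonneg (mul_nonneg (mul_nonneg (hπ0 i) (hI0 t i)) (le_max_right _ _)) hd.le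
      · exact div_nonneg (mul_nonneg (hπ0 i) (hI0 t i)) hEpos.le
    have hIp' : ∀ i, Ind t i * p t i = p t i := by
      intro i
      rcases hInd t i with h0 | h1
      · rw [h0, zero_mul]; symm; rw [hp]; split_ifs <;> rw [h0] <;> simp
      · rw [h1, one_mul]
    have hIpsum : ∑ i, Ind t i * p t i = 1 := by
      by_cases hd : 0 < ∑ j, π j * Ind t j * max (w t j) 0
      · have e : ∀ i, Ind t i * p t i
            = (π i * Ind t i * max (w t i) 0) / (∑ j, π j * Ind t j * max (w t j) 0) := by
          intro i
          rw [hp, if_pos hd]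
          rcases hInd t i with h0 | h1
          · rw [h0]; simp
          · rw [h1]; simp
        rw [Finset.sum_congr rfl fun i _ => e i, ← Finset.sum_div, div_self hd.ne']
      · have e : ∀ i, Ind t i * p t i = (π i * Ind t i) / (∑ j, π j * Ind t j) := by
          intro i
          rw [hp, if_neg hd]
          rcases hInd t i with h0 | h1
          · rw [h0]; simp
          · rw [h1]; simp
        rw [Finset.sum_congr rfl fun i _ => e i, ← Finset.sum_div, div_self hEpos.ne']
    have hh01 : 0 ≤ h t ∧ h t ≤ 1 := by
      constructor
      · rw [hh]
        exact Finset.sum_nonneg fun i _ =>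
          mul_nonneg (mul_nonneg (hI0 t i) (hpnn i)) (hℓ t i).1
      · rw [hh]
        calc ∑ i, Ind t i * p t i * ℓ t i ≤ ∑ i, Ind t i * p t i :=
              Finset.sum_le_sum fun i _ =>
                mul_le_of_le_one_right (mul_nonneg (hI0 t i) (hpnn i)) (hℓ t i).2
          _ = 1 := hIpsum
    have hgb : ∀ i, |g t i| ≤ 1 := by
      intro i
      rw [hg]
      have hl1 := (hℓ t i).1; have hl2 := (hℓ t i).2
      split_ifs with hw'
      · rw [abs_le]; exact ⟨by linarith [hh01.1], by linarith [hh01.2]⟩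
      · rw [abs_le]
        constructor
        · linarith [le_max_right (h t - ℓ t i) (0:ℝ)]
        · exact max_le (by linarith [hh01.2]) (by norm_num)
    refine ⟨hh01, ?_, ?_, ?_⟩
    · intro i
      rw [hz, abs_mul, abs_of_nonneg (hI0 t i)]
      calc Ind t i * |g t i| ≤ Ind t i * 1 := mul_le_mul_of_nonneg_left (hgb i) (hI0 t i)
        _ = Ind t i := mul_one _
    · intro i
      rw [hz]
      apply mul_le_mul_of_nonneg_left _ (hI0 t i)
      rw [hg]
      split_ifs with hw'
      · exact le_refl _
      · exact le_max_left _ _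
    · have hterm : ∀ i, π i * (z t i * w t i)
          ≤ (π i * Ind t i * max (w t i) 0) * (h t - ℓ t i) := by
        intro i
        rw [hz, hg]
        split_ifs with hw'
        · rw [max_eq_left hw'.le]
          exact le_of_eq (by ring)
        · have hw0 : w t i ≤ 0 := not_lt.1 hw'
          rw [max_eq_right hw0, mul_zero, zero_mul]
          have h1 : 0 ≤ Ind t i * max (h t - ℓ t i) 0 :=
            mul_nonneg (hI0 t i) (le_max_right _ _)
          have h2 : Ind t i * max (h t - ℓ t i) 0 * w t i ≤ 0 :=
            mul_nonpos_of_nonneg_of_nonpos h1 hw0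
          exact mul_nonpos_of_nonneg_of_nonpos (hπ0 i) h2
      have hsum0 : ∑ i, (π i * Ind t i * max (w t i) 0) * (h t - ℓ t i) = 0 := by
        by_cases hd : 0 < ∑ j, π j * Ind t j * max (w t j) 0
        · have hpi : ∀ i, (π i * Ind t i * max (w t i) 0)
              = p t i * (∑ j, π j * Ind t j * max (w t j) 0) := by
            intro i; rw [hp, if_pos hd, div_mul_cancel₀ _ hd.ne']
          have e3 : ∑ i, (π i * Ind t i * max (w t i) 0) * (h t - ℓ t i)
              = (∑ j, π j * Ind t j * max (w t j) 0) * (∑ i, p t i * (h t - ℓ t i)) := by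
            rw [Finset.mul_sum]
            apply Finset.sum_congr rfl
            intro i _; rw [hpi i]; ring
          rw [e3]
          have hps : ∑ i, p t i = 1 := by
            rw [← hIpsum]
            exact Finset.sum_congr rfl fun i _ => (hIp' i).symm
          have hplsum : ∑ i, p t i * ℓ t i = h t := by
            rw [hh]
            apply Finset.sum_congr rfl
            intro i _
            rw [hIp' i]
          have e4 : ∑ i, p t i * (h t - ℓ t i) = 0 := by
            simp_rw [mul_sub]
            rw [Finset.sum_sub_distrib, ← Finset.sum_mul, hps, one_mul, hplsum, sub_self]
          rw [e4, mul_zero]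
        · have hz0 : ∀ i, (π i * Ind t i * max (w t i) 0) = 0 := by
            intro i
            have hDzero := le_antisymm (not_lt.1 hd) hDnonneg
            exact (Finset.sum_eq_zero_iff_of_nonneg (fun j _ =>
              mul_nonneg (mul_nonneg (hπ0 j) (hI0 t j)) (le_max_right _ _))).1
              hDzero i (Finset.mem_univ i)
          apply Finset.sum_eq_zero
          intro i _
          rw [hz0 i, zero_mul]
      calc ∑ i, π i * (z t i * w t i)
          ≤ ∑ i, (π i * Ind t i * max (w t i) 0) * (h t - ℓ t i) :=
            Finset.sum_le_sum fun i _ => hterm i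
        _ = 0 := hsum0
  -- |partial sums of z| are bounded by S
  have hZabs : ∀ t, t ≤ T → ∀ i, |∑ s ∈ Finset.Icc 1 t, z s i| ≤ S t i := by
    intro t ht i
    rw [hS]
    calc |∑ s ∈ Finset.Icc 1 t, z s i| ≤ ∑ s ∈ Finset.Icc 1 t, |z s i| :=
          Finset.abs_sum_le_sum_abs _ _
      _ ≤ ∑ s ∈ Finset.Icc 1 t, Ind s i := by
          apply Finset.sum_le_sum
          intro s hs
          rw [Finset.mem_Icc] at hs
          exact ((hround s hs.1 (le_trans hs.2 ht)).2.1 i)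
  -- the wealth lower bound via the KT potential
  have hWealth : ∀ t, t ≤ T → ∀ i,
      SleepingKT.ktF (S t i) (∑ s ∈ Finset.Icc 1 t, z s i)
        ≤ 1 + ∑ s ∈ Finset.Icc 1 t, z s i * w s i := by
    intro t
    induction t with
    | zero =>
      intro _ i
      rw [show Finset.Icc 1 0 = (∅ : Finset ℕ) by simp]
      rw [Finset.sum_empty, Finset.sum_empty, add_zero, hS0 i, SleepingKT.ktF_zero]
    | succ n ih =>
      intro hn i
      have hn' : n ≤ T := Nat.le_of_succ_le hn
      have hone : (1:ℕ) ≤ n + 1 := Nat.le_add_left 1 n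
      rw [Finset.sum_Icc_succ_top hone, Finset.sum_Icc_succ_top hone]
      rcases hInd (n+1) i with hI | hI
      · have hz0 : z (n+1) i = 0 := by rw [hz, hI, zero_mul]
        rw [hz0, add_zero, zero_mul, add_zero, hSsucc, hI, add_zero]
        exact ih hn' i
      · have hzb : |z (n+1) i| ≤ 1 := by
          calc |z (n+1) i| ≤ Ind (n+1) i := (hround (n+1) hone hn).2.1 i
            _ = 1 := hI
        have hZb : |∑ s ∈ Finset.Icc 1 n, z s i| ≤ S n i := hZabs n hn' i
        have hSnn := hSnonneg n i
        have hS1 : S (n+1) i = S n i + 1 := by rw [hSsucc, hI]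
        have hSm : 1 ≤ S (n+1) i := by rw [hS1]; linarith
        have hwv : w (n+1) i = (∑ s ∈ Finset.Icc 1 n, z s i) / (S n i + 1)
            * (1 + ∑ s ∈ Finset.Icc 1 n, z s i * w s i) := by
          rw [hw, if_pos hSm, hS1]
          norm_num
        have hchord := SleepingKT.ktF_step (m := S n i + 1)
          (x := ∑ s ∈ Finset.Icc 1 n, z s i) (t := z (n+1) i)
          (by linarith) (by simpa using hZb) hzb
        rw [show S n i + 1 - 1 = S n i by ring] at hchord
        have hq : -(1:ℝ) ≤ (∑ s ∈ Finset.Icc 1 n, z s i) * z (n+1) i / (S n i + 1) := by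
          have hpos : (0:ℝ) < S n i + 1 := by linarith
          rw [le_div_iff₀ hpos]
          have h5 : |(∑ s ∈ Finset.Icc 1 n, z s i) * z (n+1) i| ≤ S n i * 1 := by
            rw [abs_mul]
            exact mul_le_mul hZb hzb (abs_nonneg _) hSnn
          have h6 := neg_abs_le ((∑ s ∈ Finset.Icc 1 n, z s i) * z (n+1) i)
          nlinarith
        have hfac : (0:ℝ) ≤ 1 + (∑ s ∈ Finset.Icc 1 n, z s i) * z (n+1) i / (S n i + 1) := by
          linarith
        rw [hS1]
        calc SleepingKT.ktF (S n i + 1) ((∑ s ∈ Finset.Icc 1 n, z s i) + z (n+1) i)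
            ≤ SleepingKT.ktF (S n i) (∑ s ∈ Finset.Icc 1 n, z s i)
              * (1 + (∑ s ∈ Finset.Icc 1 n, z s i) * z (n+1) i / (S n i + 1)) := hchord
          _ ≤ (1 + ∑ s ∈ Finset.Icc 1 n, z s i * w s i)
              * (1 + (∑ s ∈ Finset.Icc 1 n, z s i) * z (n+1) i / (S n i + 1)) :=
              mul_le_mul_of_nonneg_right (ih hn' i) hfac
          _ = 1 + ((∑ s ∈ Finset.Icc 1 n, z s i * w s i) + z (n+1) i * w (n+1) i) := by
              rw [hwv]
              have hpos : (0:ℝ) < S n i + 1 := by linarith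
              field_simp
              ring
  have hWpos : ∀ i, 0 < 1 + ∑ s ∈ Finset.Icc 1 T, z s i * w s i := by
    intro i
    refine lt_of_lt_of_le ?_ (hWealth T le_rfl i)
    apply SleepingKT.ktF_pos (hSnonneg T i)
    · have := (abs_le.1 (hZabs T le_rfl i)).1; linarith
    · have := (abs_le.1 (hZabs T le_rfl i)).2; linarith
  -- the master inequality: total prior-weighted wealth stays below 1
  have hmaster : ∑ i, π i * (1 + ∑ s ∈ Finset.Icc 1 T, z s i * w s i) ≤ 1 := by
    have e1 : ∑ i, π i * (1 + ∑ s ∈ Finset.Icc 1 T, z s i * w s i)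
        = 1 + ∑ s ∈ Finset.Icc 1 T, ∑ i, π i * (z s i * w s i) := by
      calc ∑ i, π i * (1 + ∑ s ∈ Finset.Icc 1 T, z s i * w s i)
          = ∑ i, (π i + ∑ s ∈ Finset.Icc 1 T, π i * (z s i * w s i)) := by
            apply Finset.sum_congr rfl
            intro i _
            rw [mul_add, mul_one, Finset.mul_sum]
        _ = 1 + ∑ s ∈ Finset.Icc 1 T, ∑ i, π i * (z s i * w s i) := by
            rw [Finset.sum_add_distrib, hπ1, Finset.sum_comm]
    rw [e1]
    have e2 : ∑ s ∈ Finset.Icc 1 T, ∑ i, π i * (z s i * w s i) ≤ 0 := by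
      apply Finset.sum_nonpos
      intro s hs
      rw [Finset.mem_Icc] at hs
      exact (hround s hs.1 hs.2).2.2.2
    linarith
    -- abbreviation for the per-expert complexity term
  set C : Fin N → ℝ := fun i => Real.log (1 + ∑ s ∈ Finset.Icc 1 T, z s i * w s i)
      + (1/2) * Real.log (max (S T i) 1) + 2 with hCdef
  have hSaltern : ∀ i, S T i = 0 ∨ 1 ≤ S T i := by
    intro i
    by_cases hex : ∀ s ∈ Finset.Icc 1 T, Ind s i = 0
    · left; rw [hS]; exact Finset.sum_eq_zero hex
    · right
      push_neg at hex
      obtain ⟨s0, hs0, hs0'⟩ := hex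
      have h1 : Ind s0 i = 1 := (hInd s0 i).resolve_left hs0'
      rw [hS]
      calc (1:ℝ) = Ind s0 i := h1.symm
        _ ≤ ∑ s ∈ Finset.Icc 1 T, Ind s i := Finset.single_le_sum (fun s _ => hI0 s i) hs0
  have hCfacts : ∀ i, 0 ≤ C i ∧ (∑ s ∈ Finset.Icc 1 T, z s i)^2 ≤ 2 * S T i * C i := by
    intro i
    rcases hSaltern i with h0 | h1
    · have hall : ∀ s ∈ Finset.Icc 1 T, Ind s i = 0 := by
        have h0' : ∑ s ∈ Finset.Icc 1 T, Ind s i = 0 := by rw [← hS]; exact h0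
        exact fun s hs => (Finset.sum_eq_zero_iff_of_nonneg (fun s _ => hI0 s i)).1 h0' s hs
      have hzall : ∀ s ∈ Finset.Icc 1 T, z s i = 0 := fun s hs => by
        rw [hz, hall s hs, zero_mul]
      have hZ0 : ∑ s ∈ Finset.Icc 1 T, z s i = 0 := Finset.sum_eq_zero hzall
      have hW1 : ∑ s ∈ Finset.Icc 1 T, z s i * w s i = 0 :=
        Finset.sum_eq_zero fun s hs => by rw [hzall s hs, zero_mul]
      constructor
      · simp only [hCdef]
        rw [hW1, h0]
        norm_num
      · rw [hZ0, h0]; norm_num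
    · have hmax : max (S T i) 1 = S T i := max_eq_left h1
      have hWlb := hWealth T le_rfl i
      have hlow := SleepingKT.ktF_lower h1 (hZabs T le_rfl i)
      have hWp := hWpos i
      have hlog : (∑ s ∈ Finset.Icc 1 T, z s i)^2/(2 * S T i) - (1/2)*Real.log (S T i) - 2
          ≤ Real.log (1 + ∑ s ∈ Finset.Icc 1 T, z s i * w s i) :=
        (Real.le_log_iff_exp_le hWp).2 (le_trans hlow hWlb)
      have hSpos : (0:ℝ) < S T i := by linarith
      have hZsq : (0:ℝ) ≤ (∑ s ∈ Finset.Icc 1 T, z s i)^2/(2 * S T i) := by positivity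
      constructor
      · simp only [hCdef]
        rw [hmax]
        linarith
      · simp only [hCdef]
        rw [hmax]
        have h7 : (∑ s ∈ Finset.Icc 1 T, z s i)^2/(2 * S T i)
            ≤ Real.log (1 + ∑ s ∈ Finset.Icc 1 T, z s i * w s i)
              + (1/2)*Real.log (S T i) + 2 := by linarith
        rw [div_le_iff₀ (by positivity)] at h7
        calc (∑ s ∈ Finset.Icc 1 T, z s i)^2
            ≤ (Real.log (1 + ∑ s ∈ Finset.Icc 1 T, z s i * w s i)
              + (1/2)*Real.log (S T i) + 2) * (2 * S T i) := h7
          _ = 2 * S T i * (Real.log (1 + ∑ s ∈ Finset.Icc 1 T, z s i * w s i)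
              + (1/2) * Real.log (S T i) + 2) := by ring
  -- the KL bound on the wealth logs
  have hlogWsum : ∑ i, u i * Real.log (1 + ∑ s ∈ Finset.Icc 1 T, z s i * w s i)
      ≤ ∑ i, u i * Real.log (u i / π i) := by
    have hper : ∀ i, u i * Real.log (1 + ∑ s ∈ Finset.Icc 1 T, z s i * w s i)
        ≤ u i * Real.log (u i / π i)
          + (π i * (1 + ∑ s ∈ Finset.Icc 1 T, z s i * w s i) - u i) := by
      intro i
      rcases eq_or_lt_of_le (hu0 i) with h0 | hpos
      · rw [← h0]
        have h11 := hWpos i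
        have h12 := hπ0 i
        simp only [zero_mul, sub_zero, zero_add]
        positivity
      · have hπp := hsupp i hpos
        have hWp := hWpos i
        have e : Real.log (1 + ∑ s ∈ Finset.Icc 1 T, z s i * w s i)
            = Real.log (u i / π i)
              + Real.log (π i * (1 + ∑ s ∈ Finset.Icc 1 T, z s i * w s i) / u i) := by
          rw [← Real.log_mul (ne_of_gt (div_pos hpos hπp)) (ne_of_gt (by positivity))]
          congr 1
          field_simp
        rw [e, mul_add]
        have h8 : Real.log (π i * (1 + ∑ s ∈ Finset.Icc 1 T, z s i * w s i) / u i)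
            ≤ π i * (1 + ∑ s ∈ Finset.Icc 1 T, z s i * w s i) / u i - 1 :=
          Real.log_le_sub_one_of_pos (by positivity)
        have h9 := mul_le_mul_of_nonneg_left h8 hpos.le
        have e2 : u i * (π i * (1 + ∑ s ∈ Finset.Icc 1 T, z s i * w s i) / u i - 1)
            = π i * (1 + ∑ s ∈ Finset.Icc 1 T, z s i * w s i) - u i := by
          field_simp
        linarith
    calc ∑ i, u i * Real.log (1 + ∑ s ∈ Finset.Icc 1 T, z s i * w s i)
        ≤ ∑ i, (u i * Real.log (u i / π i)
            + (π i * (1 + ∑ s ∈ Finset.Icc 1 T, z s i * w s i) - u i)) :=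
          Finset.sum_le_sum fun i _ => hper i
      _ = (∑ i, u i * Real.log (u i / π i))
          + ((∑ i, π i * (1 + ∑ s ∈ Finset.Icc 1 T, z s i * w s i)) - ∑ i, u i) := by
          rw [Finset.sum_add_distrib, Finset.sum_sub_distrib]
      _ ≤ ∑ i, u i * Real.log (u i / π i) := by
          rw [hu1]; linarith [hmaster]
  -- sum of complexities bound
  have hTc : (1:ℝ) ≤ (T:ℝ) := by exact_mod_cast hT
  have hsumC : ∑ i, u i * C i
      ≤ (∑ i, u i * Real.log (u i / π i)) + (1/2) * Real.log T + 2 := by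
    have hlogmax : ∀ i, Real.log (max (S T i) 1) ≤ Real.log T := by
      intro i
      apply Real.log_le_log (lt_of_lt_of_le one_pos (le_max_right _ _))
      exact max_le (hSle T i) hTc
    calc ∑ i, u i * C i
        = ∑ i, (u i * Real.log (1 + ∑ s ∈ Finset.Icc 1 T, z s i * w s i)
            + u i * ((1/2) * Real.log (max (S T i) 1)) + u i * 2) := by
          apply Finset.sum_congr rfl
          intro i _
          simp only [hCdef]
          ring
      _ = (∑ i, u i * Real.log (1 + ∑ s ∈ Finset.Icc 1 T, z s i * w s i))
          + (∑ i, u i * ((1/2) * Real.log (max (S T i) 1))) + (∑ i, u i * 2) := by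
          rw [Finset.sum_add_distrib, Finset.sum_add_distrib]
      _ ≤ (∑ i, u i * Real.log (u i / π i))
          + (∑ i, u i * ((1/2) * Real.log T)) + (∑ i, u i * 2) := by
          refine add_le_add (add_le_add hlogWsum ?_) le_rfl
          apply Finset.sum_le_sum
          intro i _
          apply mul_le_mul_of_nonneg_left _ (hu0 i)
          have := hlogmax i
          linarith
      _ = (∑ i, u i * Real.log (u i / π i)) + (1/2) * Real.log T + 2 := by
          rw [← Finset.sum_mul, ← Finset.sum_mul, hu1, one_mul, one_mul]
  -- regret bounded by weighted total z
  have hregret : ∑ t ∈ Finset.Icc 1 T, ∑ i, Ind t i * u i * (h t - ℓ t i)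
      ≤ ∑ i, u i * (∑ s ∈ Finset.Icc 1 T, z s i) := by
    rw [Finset.sum_comm]
    apply Finset.sum_le_sum
    intro i _
    rw [Finset.mul_sum]
    apply Finset.sum_le_sum
    intro s hs
    rw [Finset.mem_Icc] at hs
    have h10 := (hround s hs.1 hs.2).2.2.1 i
    calc Ind s i * u i * (h s - ℓ s i) = u i * (Ind s i * (h s - ℓ s i)) := by ring
      _ ≤ u i * z s i := mul_le_mul_of_nonneg_left h10 (hu0 i)
  -- Cauchy–Schwarz finish
  have hterm2 : ∀ i, u i * (∑ s ∈ Finset.Icc 1 T, z s i)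
      ≤ Real.sqrt (2 * (u i * S T i)) * Real.sqrt (u i * C i) := by
    intro i
    have hC0 := (hCfacts i).1
    have hZC := (hCfacts i).2
    have hu' := hu0 i
    have hSnn := hSnonneg T i
    have st2 : (u i * |∑ s ∈ Finset.Icc 1 T, z s i|)^2
        ≤ (2*(u i * S T i)) * (u i * C i) := by
      have e : (u i * |∑ s ∈ Finset.Icc 1 T, z s i|)^2
          = u i^2 * (∑ s ∈ Finset.Icc 1 T, z s i)^2 := by
        rw [mul_pow, sq_abs]
      calc (u i * |∑ s ∈ Finset.Icc 1 T, z s i|)^2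
          = u i^2 * (∑ s ∈ Finset.Icc 1 T, z s i)^2 := e
        _ ≤ u i^2 * (2 * S T i * C i) := mul_le_mul_of_nonneg_left hZC (sq_nonneg _)
        _ = (2*(u i * S T i)) * (u i * C i) := by ring
    calc u i * (∑ s ∈ Finset.Icc 1 T, z s i)
        ≤ u i * |∑ s ∈ Finset.Icc 1 T, z s i| :=
          mul_le_mul_of_nonneg_left (le_abs_self _) hu'
      _ = Real.sqrt ((u i * |∑ s ∈ Finset.Icc 1 T, z s i|)^2) :=
          (Real.sqrt_sq (by positivity)).symm
      _ ≤ Real.sqrt ((2*(u i * S T i)) * (u i * C i)) := Real.sqrt_le_sqrt st2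
      _ = Real.sqrt (2*(u i * S T i)) * Real.sqrt (u i * C i) :=
          Real.sqrt_mul (by positivity) _
  have hQ : ∑ i, u i * (∑ s ∈ Finset.Icc 1 T, z s i)
      ≤ Real.sqrt ((∑ i, 2*(u i * S T i)) * (∑ i, u i * C i)) := by
    have hcs := Finset.sum_mul_sq_le_sq_mul_sq Finset.univ
      (fun i => Real.sqrt (2*(u i * S T i))) (fun i => Real.sqrt (u i * C i))
    have e8 : ∑ i, Real.sqrt (2*(u i * S T i))^2 = ∑ i, 2*(u i * S T i) := by
      apply Finset.sum_congr rfl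
      intro i _
      refine Real.sq_sqrt ?_
      have := hu0 i
      have := hSnonneg T i
      positivity
    have e9 : ∑ i, Real.sqrt (u i * C i)^2 = ∑ i, u i * C i := by
      apply Finset.sum_congr rfl
      intro i _
      exact Real.sq_sqrt (mul_nonneg (hu0 i) (hCfacts i).1)
    calc ∑ i, u i * (∑ s ∈ Finset.Icc 1 T, z s i)
        ≤ ∑ i, Real.sqrt (2*(u i * S T i)) * Real.sqrt (u i * C i) :=
          Finset.sum_le_sum fun i _ => hterm2 i
      _ = Real.sqrt ((∑ i, Real.sqrt (2*(u i * S T i)) * Real.sqrt (u i * C i))^2) :=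
          (Real.sqrt_sq (Finset.sum_nonneg fun i _ =>
            mul_nonneg (Real.sqrt_nonneg _) (Real.sqrt_nonneg _))).symm
      _ ≤ Real.sqrt ((∑ i, 2*(u i * S T i)) * (∑ i, u i * C i)) := by
          apply Real.sqrt_le_sqrt
          rw [← e8, ← e9]
          exact hcs
  have hA : (0:ℝ) ≤ ∑ i, u i * S T i :=
    Finset.sum_nonneg fun i _ => mul_nonneg (hu0 i) (hSnonneg T i)
  have e7 : ∑ i, 2*(u i * S T i) = 2 * ∑ i, u i * S T i := by rw [Finset.mul_sum]
  calc ∑ t ∈ Finset.Icc 1 T, ∑ i, Ind t i * u i * (h t - ℓ t i)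
      ≤ ∑ i, u i * (∑ s ∈ Finset.Icc 1 T, z s i) := hregret
    _ ≤ Real.sqrt ((∑ i, 2*(u i * S T i)) * (∑ i, u i * C i)) := hQ
    _ ≤ Real.sqrt (2 * (∑ i, u i * S T i) *
          ((∑ i, u i * Real.log (u i / π i)) + (1 / 2) * Real.log T + 2)) := by
        apply Real.sqrt_le_sqrt
        rw [e7]
        exact mul_le_mul_of_nonneg_left hsumC (by linarith)
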